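/- Let b : (0,∞) → ℂ be a bounded measurable function having finite limits b₀ = lim_{y→0⁺} b(y) and b_∞ = lim_{y→+∞} b(y). Define γ^b : (0,∞) → M_n(ℂ) by γ^b(x₂) = ∫₀^∞ b(y/(2x₂)) N(y)[N(y)]^T dy. Then lim_{x₂→0⁺} γ^b(x₂) = b_∞·I and lim_{x₂→+∞} γ^b(x₂) = b₀·I (entrywise limits, I the n×n identity matrix). -/

import Mathlib

open MeasureTheory Filter Topology

noncomputable section

/-- The Laguerre polynomial `L_m(y) = (e^y/m!) (d/dy)^m (e^{−y} y^m)`. -/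
def laguerreL (m : ℕ) (y : ℝ) : ℝ :=
  Real.exp y / m.factorial * iteratedDeriv m (fun x => Real.exp (-x) * x ^ m) y

/-- The Laguerre function `ℓ_m(y) = (−1)^m L_m(y) e^{−y/2}`. -/
def laguerreFun (m : ℕ) (y : ℝ) : ℝ :=
  (-1 : ℝ) ^ m * laguerreL m y * Real.exp (-y / 2)

/-- The matrix `N(y)[N(y)]ᵀ`, where `N(y) = (ℓ_0(y), …, ℓ_{n−1}(y))ᵀ`. -/
def NNT (n : ℕ) (y : ℝ) : Matrix (Fin n) (Fin n) ℝ :=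
  Matrix.of fun j k : Fin n => laguerreFun j y * laguerreFun k y

/-- `γ^b(x₂) = ∫₀^∞ b(y/(2x₂)) N(y)[N(y)]ᵀ dy`, as a complex `n × n` matrix. -/
def gammaB (n : ℕ) (b : ℝ → ℂ) (x₂ : ℝ) : Matrix (Fin n) (Fin n) ℂ :=
  Matrix.of fun j k : Fin n =>
    ∫ y in Set.Ioi (0 : ℝ), b (y / (2 * x₂)) * (NNT n y j k : ℂ)

lemma G_identity (k : ℕ) : ∀ i d : ℕ,
    (∑ l ∈ Finset.range (k+1), (-1:ℤ)^l * (k.choose l) * ((i+l).choose d)) =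
      if k ≤ d then (-1:ℤ)^k * (i.choose (d-k)) else 0 := by
  induction k with
  | zero => intro i d; simp
  | succ k ih =>
    intro i d
    have peel : (∑ l ∈ Finset.range (k+2), (-1:ℤ)^l * ((k+1).choose l) * ((i+l).choose d))
        = (i.choose d : ℤ)
          - (∑ l ∈ Finset.range (k+1), (-1:ℤ)^l * (k.choose l) * ((i+1+l).choose d))
          - (∑ l ∈ Finset.range (k+1), (-1:ℤ)^l * (k.choose (l+1)) * ((i+1+l).choose d)) := by
      rw [Finset.sum_range_succ' _ (k+1)]
      have congr1 : ∀ l ∈ Finset.range (k+1),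
          (-1:ℤ)^(l+1) * ((k+1).choose (l+1)) * ((i+(l+1)).choose d)
          = -((-1:ℤ)^l * (k.choose l) * ((i+1+l).choose d))
            + -((-1:ℤ)^l * (k.choose (l+1)) * ((i+1+l).choose d)) := by
        intro l _
        have h1 : i + (l+1) = i + 1 + l := by ring
        rw [h1, Nat.choose_succ_succ, pow_succ]
        push_cast
        ring
      rw [Finset.sum_congr rfl congr1, Finset.sum_add_distrib, Finset.sum_neg_distrib,
        Finset.sum_neg_distrib]
      simp only [pow_zero, Nat.choose_zero_right, Nat.add_zero, Nat.cast_one, one_mul]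
      push_cast
      ring
    have hsecond : (∑ l ∈ Finset.range (k+1), (-1:ℤ)^l * (k.choose (l+1)) * ((i+1+l).choose d))
        = -((∑ l ∈ Finset.range (k+1), (-1:ℤ)^l * (k.choose l) * ((i+l).choose d))
            - (i.choose d : ℤ)) := by
      -- reindex: ∑_{l<k+1} (-1)^l C(k,l+1) C(i+1+l,d) = -∑_{m=1}^{k+1} (-1)^m C(k,m) C(i+m,d)
      -- and ∑_{m<k+2} (-1)^m C(k,m) C(i+m,d) = ∑_{m<k+1} ... (last term C(k,k+1)=0)
      have : (∑ m ∈ Finset.range (k+2), (-1:ℤ)^m * (k.choose m) * ((i+m).choose d))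
          = (∑ l ∈ Finset.range (k+1), (-1:ℤ)^(l+1) * (k.choose (l+1)) * ((i+(l+1)).choose d))
            + (i.choose d : ℤ) := by
        rw [Finset.sum_range_succ' _ (k+1)]; simp
      have h2 : (∑ m ∈ Finset.range (k+2), (-1:ℤ)^m * (k.choose m) * ((i+m).choose d))
          = (∑ m ∈ Finset.range (k+1), (-1:ℤ)^m * (k.choose m) * ((i+m).choose d)) := by
        rw [Finset.sum_range_succ]; simp [Nat.choose_succ_self]
      have h3 : ∀ l ∈ Finset.range (k+1),
          (-1:ℤ)^(l+1) * (k.choose (l+1)) * ((i+(l+1)).choose d)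
          = -((-1:ℤ)^l * (k.choose (l+1)) * ((i+1+l).choose d)) := by
        intro l _
        have h1 : i + (l+1) = i + 1 + l := by ring
        rw [h1, pow_succ]; ring
      rw [Finset.sum_congr rfl h3, Finset.sum_neg_distrib] at this
      rw [h2] at this
      linarith
    rw [peel, hsecond, ih, ih]
    by_cases h1 : k + 1 ≤ d
    · have hkd : k ≤ d := by omega
      rw [if_pos hkd, if_pos hkd, if_pos h1]
      obtain ⟨e, rfl⟩ : ∃ e, d = k + 1 + e := ⟨d - (k+1), by omega⟩
      have e1 : k + 1 + e - k = e + 1 := by omega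
      have e2 : k + 1 + e - (k+1) = e := by omega
      rw [e1, e2, Nat.choose_succ_succ i e]
      push_cast [pow_succ]
      ring
    · rw [if_neg h1]
      by_cases h2 : k ≤ d
      · have hd : d = k := by omega
        subst hd
        rw [if_pos h2, if_pos h2]
        simp only [Nat.sub_self, Nat.choose_zero_right, Nat.cast_one, mul_one]
        ring
      · rw [if_neg h2, if_neg h2]; ring

lemma S_identity (k i : ℕ) :
    (∑ l ∈ Finset.range (k+1), (-1:ℤ)^l * (k.choose l) * ((i+l).choose i)) =
      (-1:ℤ)^k * (i.choose k) := by
  rw [G_identity]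
  by_cases h : k ≤ i
  · rw [if_pos h, Nat.choose_symm h]
  · rw [if_neg h, Nat.choose_eq_zero_of_lt (by omega)]
    simp

lemma H_identity (j k : ℕ) :
    (∑ i ∈ Finset.range (j+1), (-1:ℤ)^i * (j.choose i) * (i.choose k)) =
      if j = k then (-1:ℤ)^j else 0 := by
  by_cases hkj : k ≤ j
  · have h1 : (∑ i ∈ Finset.range (j+1), (-1:ℤ)^i * (j.choose i) * (i.choose k))
        = ∑ i ∈ Finset.Ico k (j+1), (-1:ℤ)^i * (j.choose i) * (i.choose k) := by
      rw [Finset.range_eq_Ico]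
      refine (Finset.sum_subset (Finset.Ico_subset_Ico (Nat.zero_le k) le_rfl) ?_).symm
      intro x hx hx2
      simp only [Finset.mem_Ico] at hx hx2
      rw [Nat.choose_eq_zero_of_lt (show x < k by omega)]
      simp
    rw [h1, Finset.sum_Ico_eq_sum_range]
    have h2 : ∀ m ∈ Finset.range (j + 1 - k),
        (-1:ℤ)^(k+m) * (j.choose (k+m)) * ((k+m).choose k)
        = ((-1:ℤ)^k * (j.choose k)) * ((-1:ℤ)^m * ((j-k).choose m)) := by
      intro m hm
      simp only [Finset.mem_range] at hm
      have hc : j.choose (k+m) * (k+m).choose k = j.choose k * (j-k).choose (k+m-k) :=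
        Nat.choose_mul (by omega)
      have hc2 : k + m - k = m := by omega
      rw [hc2] at hc
      have : ((j.choose (k+m) * (k+m).choose k : ℕ) : ℤ)
          = ((j.choose k * (j-k).choose m : ℕ) : ℤ) := by rw [hc]
      push_cast at this
      rw [pow_add]
      linear_combination ((-1:ℤ)^k * (-1:ℤ)^m) * this
    rw [Finset.sum_congr rfl h2, ← Finset.mul_sum]
    have h3 : j + 1 - k = (j - k) + 1 := by omega
    rw [h3, Int.alternating_sum_range_choose]
    by_cases hjk : j = k
    · subst hjk
      simp
    · rw [if_neg (by omega), if_neg hjk, mul_zero]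
  · rw [if_neg (by omega)]
    refine Finset.sum_eq_zero fun i hi => ?_
    simp only [Finset.mem_range] at hi
    rw [Nat.choose_eq_zero_of_lt (show i < k by omega)]
    simp

noncomputable section

lemma hasDerivAt_exp_neg_mul_poly (P : Polynomial ℝ) (y : ℝ) :
    HasDerivAt (fun x => Real.exp (-x) * P.eval x)
      (Real.exp (-y) * (P.derivative - P).eval y) y := by
  have h1 : HasDerivAt (fun x : ℝ => Real.exp (-x)) (-Real.exp (-y)) y := by
    simpa using (hasDerivAt_neg y).exp
  have h2 : HasDerivAt (fun x => P.eval x) (P.derivative.eval y) y := P.hasDerivAt y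
  refine (h1.mul h2).congr_deriv ?_
  simp [Polynomial.eval_sub]
  ring

lemma iteratedDeriv_exp_neg_mul_poly (m : ℕ) (P : Polynomial ℝ) :
    iteratedDeriv m (fun x => Real.exp (-x) * P.eval x)
      = fun y => Real.exp (-y) *
          (((Polynomial.derivative - 1 : Module.End ℝ (Polynomial ℝ))^m) P).eval y := by
  induction m generalizing P with
  | zero => simp
  | succ m ih =>
    rw [iteratedDeriv_succ, ih]
    funext y
    have : (deriv fun y => Real.exp (-y) *
        (((Polynomial.derivative - 1 : Module.End ℝ (Polynomial ℝ))^m) P).eval y) y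
        = Real.exp (-y) *
          ((((Polynomial.derivative - 1 : Module.End ℝ (Polynomial ℝ))^m) P).derivative
            - ((Polynomial.derivative - 1 : Module.End ℝ (Polynomial ℝ))^m) P).eval y :=
      (hasDerivAt_exp_neg_mul_poly _ y).deriv
    rw [this, pow_succ', Module.End.mul_apply]
    simp [LinearMap.sub_apply, Module.End.one_apply]

lemma end_pow_expand (m : ℕ) :
    ((Polynomial.derivative - 1 : Module.End ℝ (Polynomial ℝ))^m) (Polynomial.X^m)
      = ∑ k ∈ Finset.range (m+1),
          ((-1:ℝ)^(m-k) * (m.choose k) * (m.descFactorial k)) • (Polynomial.X : Polynomial ℝ)^(m-k) := by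
  have hc : Commute (Polynomial.derivative : Module.End ℝ (Polynomial ℝ)) (-1) :=
    Commute.neg_one_right (R := Module.End ℝ (Polynomial ℝ)) _
  have hneg : ∀ (j : ℕ) (q : Polynomial ℝ),
      ((-1 : Module.End ℝ (Polynomial ℝ))^j) q = ((-1:ℝ)^j) • q := by
    intro j
    induction j with
    | zero => simp
    | succ j ih =>
      intro q
      rw [pow_succ, Module.End.mul_apply]
      simp [ih, pow_succ]
  rw [sub_eq_add_neg, hc.add_pow, LinearMap.sum_apply]
  refine Finset.sum_congr rfl fun k hk => ?_
  rw [Module.End.mul_apply, Module.End.mul_apply, Module.End.natCast_apply, map_nsmul,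
    hneg, Module.End.pow_apply]
  simp only [Polynomial.iterate_derivative_smul, Polynomial.iterate_derivative_X_pow_eq_smul]
  rw [← Nat.cast_smul_eq_nsmul ℝ, smul_smul, smul_smul]
  congr 1
  push_cast
  ring

lemma laguerreL_eq (m : ℕ) (y : ℝ) :
    laguerreL m y = ∑ k ∈ Finset.range (m+1), (-1:ℝ)^k * (m.choose k) / (k.factorial) * y^k := by
  have hfun : (fun x : ℝ => Real.exp (-x) * x ^ m)
      = fun x => Real.exp (-x) * (Polynomial.X ^ m : Polynomial ℝ).eval x := by
    funext x; simp
  rw [laguerreL, hfun, iteratedDeriv_exp_neg_mul_poly, end_pow_expand]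
  beta_reduce
  rw [Polynomial.eval_finset_sum]
  simp only [Polynomial.eval_smul, Polynomial.eval_pow, Polynomial.eval_X, smul_eq_mul]
  simp only [Finset.mul_sum]
  have hflip := Finset.sum_range_reflect
    (fun k => Real.exp y / m.factorial *
      (Real.exp (-y) * ((-1:ℝ)^(m-k) * (m.choose k) * (m.descFactorial k) * y^(m-k)))) (m+1)
  simp only [Nat.add_sub_cancel] at hflip
  rw [← hflip]
  refine Finset.sum_congr rfl fun j hj => ?_
  simp only [Finset.mem_range] at hj
  have hjm : j ≤ m := by omega
  have h1 : m - (m - j) = j := by omega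
  rw [h1, Nat.choose_symm hjm, Nat.descFactorial_eq_factorial_mul_choose, Nat.choose_symm hjm]
  have hfact : ((m.choose j * j.factorial * (m-j).factorial : ℕ) : ℝ) = (m.factorial : ℝ) := by
    exact_mod_cast congrArg (Nat.cast (R := ℝ)) (Nat.choose_mul_factorial_mul_factorial hjm)
  push_cast at hfact ⊢
  have hexp : Real.exp y * Real.exp (-y) = 1 := by
    rw [← Real.exp_add]; simp
  have hm : (m.factorial : ℝ) ≠ 0 := Nat.cast_ne_zero.2 m.factorial_ne_zero
  have hj' : (j.factorial : ℝ) ≠ 0 := Nat.cast_ne_zero.2 j.factorial_ne_zero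
  field_simp
  linear_combination ((m.choose j:ℝ) * y^j * ((m-j).factorial:ℝ) * (m.choose j:ℝ)
      * (j.factorial:ℝ)) * hexp + ((m.choose j:ℝ) * y^j) * hfact

lemma integrableOn_exp_neg_mul_pow (p : ℕ) :
    IntegrableOn (fun y : ℝ => Real.exp (-y) * y ^ p) (Set.Ioi 0) := by
  have h := Real.GammaIntegral_convergent (s := (p + 1 : ℝ)) (by positivity)
  refine h.congr_fun (fun x hx => ?_) measurableSet_Ioi
  rw [add_sub_cancel_right]
  beta_reduce
  rw [Real.rpow_natCast]

lemma integral_exp_neg_mul_pow (p : ℕ) :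
    ∫ y in Set.Ioi (0:ℝ), Real.exp (-y) * y ^ p = p.factorial := by
  have h := Real.Gamma_eq_integral (s := (p + 1 : ℝ)) (by positivity)
  rw [add_sub_cancel_right] at h
  have h2 : Real.Gamma ((p:ℝ) + 1) = p.factorial := Real.Gamma_nat_eq_factorial p
  rw [h2] at h
  rw [h]
  refine setIntegral_congr_fun measurableSet_Ioi fun x hx => ?_
  rw [Real.rpow_natCast]

lemma laguerreFun_mul_expand (j k : ℕ) :
    (fun y => laguerreFun j y * laguerreFun k y)
      = fun y => ∑ i ∈ Finset.range (j+1), ∑ l ∈ Finset.range (k+1),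
          (((-1:ℝ)^j * ((-1:ℝ)^i * (j.choose i) / i.factorial)) *
            ((-1:ℝ)^k * ((-1:ℝ)^l * (k.choose l) / l.factorial))) *
            (Real.exp (-y) * y^(i+l)) := by
  funext y
  simp only [laguerreFun, laguerreL_eq]
  have hE : Real.exp (-y/2) * Real.exp (-y/2) = Real.exp (-y) := by
    rw [← Real.exp_add]; ring_nf
  simp only [Finset.sum_mul, Finset.mul_sum]
  rw [Finset.sum_comm]
  refine Finset.sum_congr rfl fun i hi => Finset.sum_congr rfl fun l hl => ?_
  rw [pow_add]
  linear_combination ((-1:ℝ)^j * ((-1:ℝ)^i * (j.choose i)/i.factorial) * (-1:ℝ)^k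
    * ((-1:ℝ)^l * (k.choose l)/l.factorial) * y^i * y^l) * hE

lemma integrableOn_laguerreFun_mul (j k : ℕ) :
    IntegrableOn (fun y => laguerreFun j y * laguerreFun k y) (Set.Ioi 0) := by
  rw [laguerreFun_mul_expand]
  refine integrable_finset_sum _ fun i hi => integrable_finset_sum _ fun l hl => ?_
  exact ((integrableOn_exp_neg_mul_pow (i+l)).const_mul _)

lemma integral_laguerreFun_mul (j k : ℕ) :
    ∫ y in Set.Ioi (0:ℝ), laguerreFun j y * laguerreFun k y
      = if j = k then 1 else 0 := by
  rw [laguerreFun_mul_expand]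
  rw [integral_finset_sum _ (fun i hi =>
    integrable_finset_sum _ fun l hl => ((integrableOn_exp_neg_mul_pow (i+l)).const_mul _))]
  have hstep : ∀ i ∈ Finset.range (j+1),
      (∫ y in Set.Ioi (0:ℝ), ∑ l ∈ Finset.range (k+1),
        (((-1:ℝ)^j * ((-1:ℝ)^i * (j.choose i) / i.factorial)) *
          ((-1:ℝ)^k * ((-1:ℝ)^l * (k.choose l) / l.factorial))) * (Real.exp (-y) * y^(i+l)))
      = ((-1:ℝ)^j * (-1:ℝ)^i * (j.choose i) * (-1:ℝ)^k) * ((-1:ℝ)^k * (i.choose k)) := by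
    intro i hi
    rw [integral_finset_sum _ (fun l hl => ((integrableOn_exp_neg_mul_pow (i+l)).const_mul _))]
    have hterm : ∀ l ∈ Finset.range (k+1),
        (∫ y in Set.Ioi (0:ℝ),
          (((-1:ℝ)^j * ((-1:ℝ)^i * (j.choose i) / i.factorial)) *
            ((-1:ℝ)^k * ((-1:ℝ)^l * (k.choose l) / l.factorial))) * (Real.exp (-y) * y^(i+l)))
        = ((-1:ℝ)^j * (-1:ℝ)^i * (j.choose i) * (-1:ℝ)^k)
            * ((-1:ℝ)^l * (k.choose l) * ((i+l).choose i)) := by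
      intro l hl
      rw [integral_const_mul, integral_exp_neg_mul_pow]
      have hfact : (((i+l).factorial : ℕ) : ℝ)
          = (((i+l).choose i) : ℝ) * (i.factorial : ℝ) * (l.factorial : ℝ) := by
        have := Nat.choose_mul_factorial_mul_factorial (show i ≤ i + l by omega)
        rw [Nat.add_sub_cancel_left] at this
        exact_mod_cast this.symm
      have hi0 : (i.factorial : ℝ) ≠ 0 := Nat.cast_ne_zero.2 i.factorial_ne_zero
      have hl0 : (l.factorial : ℝ) ≠ 0 := Nat.cast_ne_zero.2 l.factorial_ne_zero
      field_simp
      linear_combination ((j.choose i : ℝ)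
        * (k.choose l)) * hfact
    rw [Finset.sum_congr rfl hterm, ← Finset.mul_sum]
    congr 1
    have hS := S_identity k i
    have hSr : (∑ l ∈ Finset.range (k+1), (-1:ℝ)^l * (k.choose l) * ((i+l).choose i))
        = (-1:ℝ)^k * (i.choose k) := by exact_mod_cast hS
    rw [← hSr]
  rw [Finset.sum_congr rfl hstep]
  have h2 : ∀ i ∈ Finset.range (j+1),
      ((-1:ℝ)^j * (-1:ℝ)^i * (j.choose i) * (-1:ℝ)^k) * ((-1:ℝ)^k * (i.choose k))
      = (-1:ℝ)^j * ((-1:ℝ)^k * (-1:ℝ)^k) * ((-1:ℝ)^i * (j.choose i) * (i.choose k)) := by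
    intro i hi; ring
  rw [Finset.sum_congr rfl h2, ← Finset.mul_sum]
  have hH := H_identity j k
  have hHr : (∑ i ∈ Finset.range (j+1), (-1:ℝ)^i * (j.choose i) * (i.choose k))
      = if j = k then (-1:ℝ)^j else 0 := by
    rcases eq_or_ne j k with h | h
    · rw [if_pos h]; rw [if_pos h] at hH; exact_mod_cast hH
    · rw [if_neg h]; rw [if_neg h] at hH; exact_mod_cast hH
  rw [hHr]
  rcases eq_or_ne j k with h | h
  · subst h
    rw [if_pos rfl, if_pos rfl]
    rw [← pow_add, ← pow_add, ← pow_add]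
    exact Even.neg_one_pow ⟨2*j, by ring⟩
  · rw [if_neg h, if_neg h]; ring

lemma continuous_laguerreFun_mul (j k : ℕ) :
    Continuous fun y => laguerreFun j y * laguerreFun k y := by
  rw [laguerreFun_mul_expand]
  exact continuous_finset_sum _ fun i _ => continuous_finset_sum _ fun l _ =>
    continuous_const.mul ((Real.continuous_exp.comp continuous_neg).mul (continuous_pow _))

lemma tendsto_integral_b_entry (b : ℝ → ℂ) (c : ℂ) (C : ℝ)
    (hb_meas : Measurable b) (hb : ∀ y : ℝ, 0 < y → ‖b y‖ ≤ C)
    (l : Filter ℝ) [l.IsCountablyGenerated]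
    (hpos : ∀ᶠ x₂ in l, 0 < x₂)
    (hlim : ∀ y : ℝ, 0 < y → Tendsto (fun x₂ => b (y / (2 * x₂))) l (𝓝 c))
    (j k : ℕ) :
    Tendsto (fun x₂ => ∫ y in Set.Ioi (0:ℝ),
        b (y / (2 * x₂)) * ((laguerreFun j y * laguerreFun k y : ℝ) : ℂ)) l
      (𝓝 (c * (if j = k then 1 else 0))) := by
  have key : Tendsto (fun x₂ => ∫ y in Set.Ioi (0:ℝ),
      b (y / (2 * x₂)) * ((laguerreFun j y * laguerreFun k y : ℝ) : ℂ)) l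
      (𝓝 (∫ y in Set.Ioi (0:ℝ), c * ((laguerreFun j y * laguerreFun k y : ℝ) : ℂ))) := by
    refine tendsto_integral_filter_of_dominated_convergence
      (fun y => C * |laguerreFun j y * laguerreFun k y|) ?_ ?_ ?_ ?_
    · filter_upwards [hpos] with x₂ hx₂
      have h1 : Measurable fun y : ℝ => b (y / (2 * x₂)) :=
        hb_meas.comp (measurable_id.div_const _)
      exact h1.aestronglyMeasurable.mul
        ((Complex.continuous_ofReal.comp (continuous_laguerreFun_mul j k)).aestronglyMeasurable)
    · filter_upwards [hpos] with x₂ hx₂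
      filter_upwards [ae_restrict_mem measurableSet_Ioi] with y hy
      rw [norm_mul, Complex.norm_real]
      have hy2 : 0 < y / (2 * x₂) := div_pos hy (by linarith)
      exact mul_le_mul_of_nonneg_right (hb _ hy2) (abs_nonneg _)
    · exact ((integrableOn_laguerreFun_mul j k).abs).const_mul C
    · filter_upwards [ae_restrict_mem measurableSet_Ioi] with y hy
      exact (hlim y hy).mul_const _
  have heq : (∫ y in Set.Ioi (0:ℝ), c * ((laguerreFun j y * laguerreFun k y : ℝ) : ℂ))
      = c * (if j = k then 1 else 0) := by
    rw [integral_const_mul]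
    congr 1
    have h3 : (∫ y in Set.Ioi (0:ℝ), ((laguerreFun j y * laguerreFun k y : ℝ) : ℂ))
        = ((∫ y in Set.Ioi (0:ℝ), laguerreFun j y * laguerreFun k y : ℝ) : ℂ) :=
      integral_ofReal
    rw [h3, integral_laguerreFun_mul]
    split <;> simp
  rwa [heq] at key

/-- If `b : (0,∞) → ℂ` is bounded measurable with limits `b₀` at `0⁺`
and `bInfty` at `+∞`, then `γ^b(x₂) → bInfty • I` as `x₂ → 0⁺` and `γ^b(x₂) → b₀ • I`
as `x₂ → +∞`. -/
theorem gammaB_limits (n : ℕ) (hn : 1 ≤ n) (b : ℝ → ℂ) (b₀ bInfty : ℂ)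
    (hb_meas : Measurable b) (hb_bdd : ∃ C : ℝ, ∀ y : ℝ, 0 < y → ‖b y‖ ≤ C)
    (hb₀ : Tendsto b (𝓝[>] (0 : ℝ)) (𝓝 b₀))
    (hbInfty : Tendsto b atTop (𝓝 bInfty)) :
    Tendsto (fun x₂ => gammaB n b x₂) (𝓝[>] (0 : ℝ))
        (𝓝 (bInfty • (1 : Matrix (Fin n) (Fin n) ℂ))) ∧
      Tendsto (fun x₂ => gammaB n b x₂) atTop
        (𝓝 (b₀ • (1 : Matrix (Fin n) (Fin n) ℂ))) := by
  obtain ⟨C, hC⟩ := hb_bdd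
  have hentry : ∀ (j k : Fin n) (c : ℂ),
      (c • (1 : Matrix (Fin n) (Fin n) ℂ)) j k = c * (if (j:ℕ) = (k:ℕ) then 1 else 0) := by
    intro j k c
    by_cases h : j = k
    · subst h; simp [Matrix.smul_apply, Matrix.one_apply]
    · rw [Matrix.smul_apply, Matrix.one_apply, if_neg h,
        if_neg (fun hc => h (Fin.val_injective hc))]
      simp
  constructor
  · refine tendsto_pi_nhds.2 fun j => tendsto_pi_nhds.2 fun k => ?_
    have hpos : ∀ᶠ x₂ in 𝓝[>] (0:ℝ), 0 < x₂ := eventually_mem_nhdsWithin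
    have hlim : ∀ y : ℝ, 0 < y →
        Tendsto (fun x₂ => b (y / (2 * x₂))) (𝓝[>] (0:ℝ)) (𝓝 bInfty) := by
      intro y hy
      refine hbInfty.comp ?_
      have h1 : Tendsto (fun x₂ : ℝ => (y/2) * x₂⁻¹) (𝓝[>] (0:ℝ)) atTop :=
        tendsto_inv_nhdsGT_zero.const_mul_atTop (by positivity)
      refine h1.congr fun x => ?_
      simp only [div_eq_mul_inv, mul_inv]
      ring
    have h := tendsto_integral_b_entry b bInfty C hb_meas hC (𝓝[>] (0:ℝ)) hpos hlim j k
    rw [hentry j k bInfty]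
    exact h
  · refine tendsto_pi_nhds.2 fun j => tendsto_pi_nhds.2 fun k => ?_
    have hpos : ∀ᶠ x₂ in (atTop : Filter ℝ), 0 < x₂ := eventually_gt_atTop 0
    have hlim : ∀ y : ℝ, 0 < y →
        Tendsto (fun x₂ => b (y / (2 * x₂))) atTop (𝓝 b₀) := by
      intro y hy
      refine hb₀.comp ?_
      rw [tendsto_nhdsWithin_iff]
      constructor
      · have h1 : Tendsto (fun x₂ : ℝ => (y/2) * x₂⁻¹) atTop (𝓝 0) := by
          simpa using tendsto_inv_atTop_zero.const_mul (y/2)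
        refine h1.congr fun x => ?_
        simp only [div_eq_mul_inv, mul_inv]
        ring
      · filter_upwards [eventually_gt_atTop (0:ℝ)] with x hx
        exact div_pos hy (by linarith)
    have h := tendsto_integral_b_entry b b₀ C hb_meas hC atTop hpos hlim j k
    rw [hentry j k b₀]
    exact h
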